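/- As ω → 0⁺, the slope of the vector field ℓ' = −ω(α² + ℓ²) + (α² + ℓ²)^{3/2} − 2α³ℓ − αℓ³, α' = −α⁴ along the line segment ℓ = 2ω(1 − α/(4ω)) converges, for each fixed α > 0, to −5^{3/2}/(8α) − 9/8, which is strictly less than −1/2. -/
import Mathlib


open Real Set Filter Topology

noncomputable def spiralL (ω ℓ α : ℝ) : ℝ :=
  -ω * (α ^ 2 + ℓ ^ 2) + (α ^ 2 + ℓ ^ 2) ^ ((3 : ℝ) / 2) - 2 * α ^ 3 * ℓ - α * ℓ ^ 3

noncomputable def spiralA (α : ℝ) : ℝ := -α ^ 4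

/-- As ω → 0⁺, the slope of the vector field along the line ℓ = 2ω(1 − α/(4ω)) = 2ω − α/2
converges, for each fixed α > 0, to −5^{3/2}/(8α) − 9/8 < −1/2. -/
theorem slope_limit_on_line (α : ℝ) (hα : 0 < α) :
    Tendsto (fun ω : ℝ => spiralL ω (2 * ω * (1 - α / (4 * ω))) α / spiralA α)
      (nhdsWithin 0 (Set.Ioi 0))
      (nhds (-(5 : ℝ) ^ ((3 : ℝ) / 2) / (8 * α) - 9 / 8)) ∧
    -(5 : ℝ) ^ ((3 : ℝ) / 2) / (8 * α) - 9 / 8 < -(1 / 2) := by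
  have hα0 : α ≠ 0 := ne_of_gt hα
  have h5 : (0:ℝ) < (5:ℝ) ^ ((3:ℝ)/2) := Real.rpow_pos_of_pos (by norm_num) _
  constructor
  · have hcont : Continuous fun ω : ℝ => spiralL ω (2*ω - α/2) α := by
      unfold spiralL
      apply Continuous.sub
      apply Continuous.sub
      apply Continuous.add
      · fun_prop
      · apply Continuous.rpow_const
        · fun_prop
        · intro x; right; norm_num
      · fun_prop
      · fun_prop
    have hval : spiralL 0 (2*0 - α/2) α / spiralA α
        = -(5 : ℝ) ^ ((3 : ℝ) / 2) / (8 * α) - 9 / 8 := by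
      have h1 : ((5:ℝ)/4*α^2) ^ ((3:ℝ)/2)
          = ((5:ℝ)/4) ^ ((3:ℝ)/2) * (α^2) ^ ((3:ℝ)/2) :=
        Real.mul_rpow (by norm_num) (sq_nonneg α)
      have h2 : ((α:ℝ)^2) ^ ((3:ℝ)/2) = α^3 := by
        rw [← Real.rpow_natCast α 2, ← Real.rpow_mul hα.le,
          show ((2:ℕ):ℝ) * ((3:ℝ)/2) = ((3:ℕ):ℝ) by norm_num, Real.rpow_natCast]
      have h3 : ((5:ℝ)/4) ^ ((3:ℝ)/2) = (5:ℝ) ^ ((3:ℝ)/2) / 8 := by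
        rw [Real.div_rpow (by norm_num) (by norm_num)]
        congr 1
        rw [show (4:ℝ) = 2 ^ ((2:ℕ):ℝ) by
            rw [Real.rpow_natCast]; norm_num,
          ← Real.rpow_mul (by norm_num),
          show ((2:ℕ):ℝ) * ((3:ℝ)/2) = ((3:ℕ):ℝ) by norm_num, Real.rpow_natCast]
        norm_num
      simp only [spiralL, spiralA]
      rw [show α^2 + (2*0 - α/2)^2 = (5:ℝ)/4*α^2 by ring, h1, h2, h3]
      field_simp
      ring
    have ht : Tendsto (fun ω : ℝ => spiralL ω (2*ω - α/2) α / spiralA α)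
        (nhdsWithin 0 (Set.Ioi 0))
        (nhds (-(5 : ℝ) ^ ((3 : ℝ) / 2) / (8 * α) - 9 / 8)) := by
      rw [← hval]
      exact ((hcont.tendsto 0).div_const _).mono_left nhdsWithin_le_nhds
    refine ht.congr' ?_
    filter_upwards [self_mem_nhdsWithin] with ω hω
    have hω0 : ω ≠ 0 := ne_of_gt hω
    have : 2 * ω * (1 - α / (4 * ω)) = 2*ω - α/2 := by
      field_simp; ring
    rw [this]
  · have hpos : 0 < (5:ℝ) ^ ((3:ℝ)/2) / (8*α) := div_pos h5 (by positivity)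
    have : -(5:ℝ) ^ ((3:ℝ)/2) / (8*α) = -((5:ℝ) ^ ((3:ℝ)/2) / (8*α)) := by ring
    rw [this]
    linarith
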